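/- arXiv:1901.09712 — 3 statements merged into one kernel-verified Lean document; each statement's English description precedes it below -/
import Mathlib

section
/- Assume the setup, the stability assumption, and the γ-feasibility assumption. Then the tangent spaces are transverse: for every tangent space T' = T(L') at a rank-r symmetric matrix L' with ρ(T, T') ≤ ξ(T)/2, it holds Ω ∩ T' = {0}. -/
noncomputable section

open scoped BigOperators
open Matrix

namespace IsingSL

/-- The space of real `d × d` matrices.  Symmetry (membership in `Sym(d)`) is imposed
through explicit hypotheses `Matrix.IsSymm`. -/
abbrev Mat (d : ℕ) := Matrix (Fin d) (Fin d) ℝ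

/-- The trace inner product `⟨A, B⟩ = tr(Aᵀ B)`. -/
def minner {d : ℕ} (A B : Mat d) : ℝ := (Aᵀ * B).trace

/-- Entrywise `ℓ∞`-norm of a matrix. -/
def normInf {d : ℕ} (M : Mat d) : ℝ := ⨆ p : Fin d × Fin d, |M p.1 p.2|

/-- Entrywise `ℓ1`-norm of a matrix. -/
def norm1 {d : ℕ} (M : Mat d) : ℝ := ∑ i, ∑ j, |M i j|

/-- Euclidean norm of a vector. -/
def vnorm {d : ℕ} (v : Fin d → ℝ) : ℝ := Real.sqrt (∑ i, v i ^ 2)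

/-- Spectral norm (`ℓ2`-operator norm) of a matrix. -/
def specNorm {d : ℕ} (M : Mat d) : ℝ :=
  sSup {t | ∃ v : Fin d → ℝ, vnorm v ≤ 1 ∧ t = vnorm (M.mulVec v)}

/-- Nuclear norm of a matrix (sum of singular values), characterized via
trace duality with the spectral norm. -/
def nucNorm {d : ℕ} (M : Mat d) : ℝ :=
  sSup {t | ∃ B : Mat d, specNorm B ≤ 1 ∧ t = minner M B}

/-- The `γ`-norm of a pair of matrices: `‖(S, L)‖_γ = max {‖S‖_∞/γ, ‖L‖}`. -/
def ganorm {d : ℕ} (γ : ℝ) (S L : Mat d) : ℝ := max (normInf S / γ) (specNorm L)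

/-- The `{0,1}`-vector corresponding to `x : Fin d → Bool`. -/
def b2r {d : ℕ} (x : Fin d → Bool) : Fin d → ℝ := fun i => if x i then 1 else 0

/-- The sufficient statistics `Φ(x) = x xᵀ` for `x ∈ {0,1}^d`. -/
def phi {d : ℕ} (x : Fin d → Bool) : Mat d := Matrix.of fun i j => b2r x i * b2r x j

/-- The log-partition function `a(Θ)` of the pairwise Ising model. -/
def logA {d : ℕ} (Θ : Mat d) : ℝ :=
  Real.log (∑ x : Fin d → Bool, Real.exp (minner Θ (phi x)))

/-- The Ising probability mass function `p(x) = exp(⟨Θ, Φ(x)⟩ - a(Θ))`. -/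
def isingPMF {d : ℕ} (Θ : Mat d) (x : Fin d → Bool) : ℝ :=
  Real.exp (minner Θ (phi x) - logA Θ)

/-- `Φ* = E_Θ[Φ]`, the expected sufficient statistics; this is the gradient `∇a(Θ)`
of the log-partition function w.r.t. the trace inner product. -/
def meanPhi {d : ℕ} (Θ : Mat d) : Mat d := ∑ x : Fin d → Bool, isingPMF Θ x • phi x

/-- The Hessian `∇²a(Θ)` of the log-partition function as a linear operator on matrices;
it is the covariance operator `M ↦ E[⟨Φ,M⟩Φ] - ⟨E[Φ],M⟩E[Φ]` of the sufficient statistics. -/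
def hessA {d : ℕ} (Θ : Mat d) (M : Mat d) : Mat d :=
  (∑ x : Fin d → Bool, (isingPMF Θ x * minner (phi x) M) • phi x)
    - minner (meanPhi Θ) M • meanPhi Θ

/-- The empirical second-moment matrix `Φ^n` of a sample. -/
def empPhi {d n : ℕ} (xs : Fin n → (Fin d → Bool)) : Mat d :=
  (n : ℝ)⁻¹ • ∑ k, phi (xs k)

/-- The negative log-likelihood `ℓ(Θ) = a(Θ) - ⟨Θ, Φ^n⟩`. -/
def nll {d : ℕ} (Phin Θ : Mat d) : ℝ := logA Θ - minner Θ Phin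

/-- The probability of the event `E` under `n` i.i.d. samples from the Ising
distribution with parameter `Θ`. -/
def samplesProb {d : ℕ} (Θ : Mat d) (n : ℕ) (E : Set (Fin n → (Fin d → Bool))) : ℝ :=
  ∑ xs : Fin n → (Fin d → Bool), E.indicator (fun ys => ∏ k, isingPMF Θ (ys k)) xs

/-- Probability vectors on `{0,1}^d`. -/
def IsProbVec {d : ℕ} (p : (Fin d → Bool) → ℝ) : Prop :=
  (∀ x, 0 ≤ p x) ∧ ∑ x : Fin d → Bool, p x = 1

/-- The (Shannon) entropy `H(p) = -Σ_x p(x) log p(x)` (with `0 log 0 = 0`). -/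
def entropy {d : ℕ} (p : (Fin d → Bool) → ℝ) : ℝ :=
  -∑ x : Fin d → Bool, p x * Real.log (p x)

/-- The expectation `E_p[Φ]` of the sufficient statistics under `p`. -/
def Ephi {d : ℕ} (p : (Fin d → Bool) → ℝ) : Mat d :=
  ∑ x : Fin d → Bool, p x • phi x

/-- The linear identification of `d × d` matrices with the euclidean space on `d·d`
coordinates; under this identification the euclidean inner product corresponds to the
trace inner product on matrices. -/
def matEuclid (d : ℕ) : Mat d ≃ₗ[ℝ] EuclideanSpace ℝ (Fin d × Fin d) where
  toFun M := WithLp.toLp 2 (fun p => M p.1 p.2)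
  invFun v := Matrix.of fun i j => v (i, j)
  map_add' _ _ := rfl
  map_smul' _ _ := rfl
  left_inv _ := rfl
  right_inv _ := rfl

/-- Orthogonal projection onto a subspace `V` of `Mat d`, w.r.t. the trace inner product. -/
def proj {d : ℕ} (V : Submodule ℝ (Mat d)) (M : Mat d) : Mat d :=
  (matEuclid d).symm
    ((Submodule.orthogonalProjectionOnto (V.map ((matEuclid d) : Mat d →ₗ[ℝ] EuclideanSpace ℝ (Fin d × Fin d)))
      ((matEuclid d) M) : EuclideanSpace ℝ (Fin d × Fin d)))

/-- Projection onto the orthogonal complement of `V`. -/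
def projPerp {d : ℕ} (V : Submodule ℝ (Mat d)) (M : Mat d) : Mat d := M - proj V M

/-- The twisting `ρ(T, T') = max_{‖M‖=1} ‖(P_T - P_{T'}) M‖` between two subspaces. -/
def rho {d : ℕ} (T T' : Submodule ℝ (Mat d)) : ℝ :=
  sSup {t | ∃ M : Mat d, specNorm M = 1 ∧ t = specNorm (proj T M - proj T' M)}

/-- `ξ(T)`: the smallest `ξ` with `‖M‖_∞ ≤ ξ ‖M‖` for all `M ∈ T`. -/
def xi {d : ℕ} (T : Submodule ℝ (Mat d)) : ℝ :=
  sInf {c | ∀ M ∈ T, normInf M ≤ c * specNorm M}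

/-- `μ(Ω)`: the smallest `μ` with `‖N‖ ≤ μ ‖N‖_∞` for all `N ∈ Ω`. -/
def mu {d : ℕ} (Om : Submodule ℝ (Mat d)) : ℝ :=
  sInf {c | ∀ N ∈ Om, specNorm N ≤ c * normInf N}

/-- `Ω(S) = {M ∈ Sym(d) : supp(M) ⊆ supp(S)}`, the tangent space at `S` to the variety
of symmetric matrices with at most `|supp S|` nonzero entries. -/
def OmegaS {d : ℕ} (S : Mat d) : Submodule ℝ (Mat d) where
  carrier := {M | M.IsSymm ∧ ∀ i j, S i j = 0 → M i j = 0}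
  add_mem' := by
    rintro a b ⟨ha, ha0⟩ ⟨hb, hb0⟩
    refine ⟨?_, fun i j h => ?_⟩
    · show (a + b)ᵀ = a + b
      rw [Matrix.transpose_add, ha, hb]
    · show a i j + b i j = 0
      rw [ha0 i j h, hb0 i j h, add_zero]
  zero_mem' := by
    refine ⟨?_, fun i j _ => rfl⟩
    show (0 : Mat _)ᵀ = 0
    rw [Matrix.transpose_zero]
  smul_mem' := by
    rintro c a ⟨ha, ha0⟩
    refine ⟨?_, fun i j h => ?_⟩
    · show (c • a)ᵀ = c • a
      rw [Matrix.transpose_smul, ha]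
    · show c * a i j = 0
      rw [ha0 i j h, mul_zero]

/-- `T(L) = {U Xᵀ + X Uᵀ : X ∈ ℝ^{d×r}}`, the tangent space at `L = U D Uᵀ` to the
variety of symmetric matrices of rank at most `r`. -/
def TSpace {d r : ℕ} (U : Matrix (Fin d) (Fin r) ℝ) : Submodule ℝ (Mat d) where
  carrier := {M | ∃ X : Matrix (Fin d) (Fin r) ℝ, M = U * Xᵀ + X * Uᵀ}
  add_mem' := by
    rintro a b ⟨X, rfl⟩ ⟨Y, rfl⟩
    exact ⟨X + Y, by rw [Matrix.transpose_add, Matrix.mul_add, Matrix.add_mul]; abel⟩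
  zero_mem' := ⟨0, by simp⟩
  smul_mem' := by
    rintro c a ⟨X, rfl⟩
    exact ⟨c • X, by rw [Matrix.transpose_smul, Matrix.mul_smul, Matrix.smul_mul, smul_add]⟩

/-- `T'` is the tangent space `T(L')` at some rank-`r` symmetric matrix
`L' = U D Uᵀ` (restricted eigenvalue decomposition: `U` with orthonormal columns,
`D` invertible diagonal). -/
def IsTangentSpace (d r : ℕ) (T' : Submodule ℝ (Mat d)) : Prop :=
  ∃ (U : Matrix (Fin d) (Fin r) ℝ) (D : Matrix (Fin r) (Fin r) ℝ),
    Uᵀ * U = 1 ∧ D.IsDiag ∧ IsUnit D.det ∧ T' = TSpace U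

/-- A solution of the tangent-space constrained problem
`min_{(S,L) ∈ Om × T'} ℓ(S+L) + λ(γ‖S‖₁ + ‖L‖_*)`. -/
def IsYSol {d : ℕ} (Om T' : Submodule ℝ (Mat d)) (Phin : Mat d) (lam γ : ℝ)
    (p : Mat d × Mat d) : Prop :=
  p.1 ∈ Om ∧ p.2 ∈ T' ∧
    ∀ q : Mat d × Mat d, q.1 ∈ Om → q.2 ∈ T' →
      nll Phin (p.1 + p.2) + lam * (γ * norm1 p.1 + nucNorm p.2) ≤
        nll Phin (q.1 + q.2) + lam * (γ * norm1 q.1 + nucNorm q.2)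

/-- A solution of the convex program
`min_{S, L ∈ Sym(d), L ⪰ 0} ℓ(S+L) + λ(γ‖S‖₁ + tr L)`. -/
def IsSLSol {d : ℕ} (Phin : Mat d) (lam γ : ℝ) (p : Mat d × Mat d) : Prop :=
  p.1.IsSymm ∧ p.2.PosSemidef ∧
    ∀ q : Mat d × Mat d, q.1.IsSymm → q.2.PosSemidef →
      nll Phin (p.1 + p.2) + lam * (γ * norm1 p.1 + p.2.trace) ≤
        nll Phin (q.1 + q.2) + lam * (γ * norm1 q.1 + q.2.trace)


section AuxNorm

variable {d : ℕ}

lemma vnorm_eq (v : Fin d → ℝ) : vnorm v = ‖(WithLp.equiv 2 (Fin d → ℝ)).symm v‖ := by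
  rw [EuclideanSpace.norm_eq]
  simp [vnorm, sq_abs]

lemma vnorm_nonneg (v : Fin d → ℝ) : 0 ≤ vnorm v := Real.sqrt_nonneg _

lemma vnorm_zero : vnorm (0 : Fin d → ℝ) = 0 := by simp [vnorm]

lemma vnorm_add (v w : Fin d → ℝ) : vnorm (v + w) ≤ vnorm v + vnorm w := by
  simp only [vnorm_eq]
  exact norm_add_le _ _

lemma vnorm_smul (c : ℝ) (v : Fin d → ℝ) : vnorm (c • v) = |c| * vnorm v := by
  simp only [vnorm_eq]
  rw [show (WithLp.equiv 2 (Fin d → ℝ)).symm (c • v)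
      = c • (WithLp.equiv 2 (Fin d → ℝ)).symm v from rfl]
  rw [norm_smul]; simp

lemma abs_dot_le (v w : Fin d → ℝ) : |v ⬝ᵥ w| ≤ vnorm v * vnorm w := by
  simp only [vnorm_eq]
  have := abs_real_inner_le_norm ((WithLp.equiv 2 (Fin d → ℝ)).symm v)
    ((WithLp.equiv 2 (Fin d → ℝ)).symm w)
  rw [PiLp.inner_apply] at this
  simpa [dotProduct, RCLike.inner_apply, mul_comm] using this

lemma vnorm_sq (v : Fin d → ℝ) : vnorm v ^ 2 = v ⬝ᵥ v := by
  simp only [vnorm, dotProduct]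
  rw [Real.sq_sqrt (by positivity)]
  simp [sq]

lemma abs_le_vnorm (v : Fin d → ℝ) (i : Fin d) : |v i| ≤ vnorm v := by
  rw [vnorm, ← Real.sqrt_sq_eq_abs]
  exact Real.sqrt_le_sqrt (Finset.single_le_sum (fun j _ => sq_nonneg (v j)) (Finset.mem_univ i))

lemma specSet_nonempty (M : Mat d) :
    {t | ∃ v : Fin d → ℝ, vnorm v ≤ 1 ∧ t = vnorm (M.mulVec v)}.Nonempty :=
  ⟨vnorm (M.mulVec 0), 0, by simp [vnorm_zero], rfl⟩

lemma norm1_nonneg (M : Mat d) : 0 ≤ norm1 M := by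
  apply Finset.sum_nonneg; intro i _; apply Finset.sum_nonneg; intro j _; positivity

lemma vnorm_mulVec_le_norm1 (M : Mat d) (v : Fin d → ℝ) (hv : vnorm v ≤ 1) :
    vnorm (M.mulVec v) ≤ norm1 M := by
  have habs : ∀ i, |M.mulVec v i| ≤ ∑ j, |M i j| := by
    intro i
    calc |M.mulVec v i| ≤ ∑ j, |M i j * v j| := by
          simpa [Matrix.mulVec, dotProduct] using Finset.abs_sum_le_sum_abs (fun j => M i j * v j) Finset.univ
    _ ≤ ∑ j, |M i j| := by
          apply Finset.sum_le_sum; intro j _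
          rw [abs_mul]
          have := (abs_le_vnorm v j).trans hv
          nlinarith [abs_nonneg (M i j), abs_nonneg (v j)]
  have h1 : vnorm (M.mulVec v) ^ 2 ≤ (∑ i, (∑ j, |M i j|) ^ 2) := by
    rw [vnorm_sq]
    simp only [dotProduct]
    apply Finset.sum_le_sum; intro i _
    rw [← sq]
    calc (M.mulVec v i) ^ 2 = |M.mulVec v i| ^ 2 := (sq_abs _).symm
    _ ≤ (∑ j, |M i j|) ^ 2 := by
        apply sq_le_sq' <;> nlinarith [habs i, abs_nonneg (M.mulVec v i)]
  have h2 : (∑ i, (∑ j, |M i j|) ^ 2) ≤ (∑ i, ∑ j, |M i j|) ^ 2 := by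
    rw [sq (∑ i, ∑ j, |M i j|)]
    calc (∑ i, (∑ j, |M i j|) ^ 2) ≤ ∑ i, (∑ j, |M i j|) * (∑ i', ∑ j, |M i' j|) := by
          apply Finset.sum_le_sum; intro i _
          rw [sq]
          apply mul_le_mul_of_nonneg_left _ (by positivity)
          exact Finset.single_le_sum (f := fun i' => ∑ j, |M i' j|)
            (fun i' _ => by positivity) (Finset.mem_univ i)
    _ = (∑ i, ∑ j, |M i j|) * (∑ i, ∑ j, |M i j|) := by rw [← Finset.sum_mul]
  calc vnorm (M.mulVec v) = Real.sqrt (vnorm (M.mulVec v) ^ 2) :=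
        (Real.sqrt_sq (vnorm_nonneg _)).symm
  _ ≤ Real.sqrt ((norm1 M) ^ 2) := Real.sqrt_le_sqrt (h1.trans h2)
  _ = norm1 M := Real.sqrt_sq (norm1_nonneg M)

lemma specSet_bddAbove (M : Mat d) :
    BddAbove {t | ∃ v : Fin d → ℝ, vnorm v ≤ 1 ∧ t = vnorm (M.mulVec v)} := by
  refine ⟨norm1 M, ?_⟩
  rintro t ⟨v, hv, rfl⟩
  exact vnorm_mulVec_le_norm1 M v hv

lemma le_specNorm_of (M : Mat d) (v : Fin d → ℝ) (hv : vnorm v ≤ 1) :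
    vnorm (M.mulVec v) ≤ specNorm M :=
  le_csSup (specSet_bddAbove M) ⟨v, hv, rfl⟩

lemma specNorm_nonneg (M : Mat d) : 0 ≤ specNorm M := by
  have := le_specNorm_of M 0 (by simp [vnorm_zero])
  simpa [vnorm_zero] using (vnorm_nonneg (M.mulVec 0)).trans this

lemma specNorm_le (M : Mat d) (c : ℝ)
    (h : ∀ v : Fin d → ℝ, vnorm v ≤ 1 → vnorm (M.mulVec v) ≤ c) : specNorm M ≤ c := by
  apply csSup_le (specSet_nonempty M)
  rintro t ⟨v, hv, rfl⟩; exact h v hv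

lemma specNorm_le_norm1 (M : Mat d) : specNorm M ≤ norm1 M :=
  specNorm_le M _ (vnorm_mulVec_le_norm1 M)

lemma vnorm_mulVec_le (M : Mat d) (v : Fin d → ℝ) :
    vnorm (M.mulVec v) ≤ specNorm M * vnorm v := by
  rcases eq_or_ne v 0 with rfl | hv
  · simp [vnorm_zero]
  · have hvpos : 0 < vnorm v := by
      rcases Function.ne_iff.1 hv with ⟨i, hi⟩
      have h1 : 0 < |v i| := abs_pos.2 hi
      linarith [abs_le_vnorm v i]
    have h1 : vnorm ((vnorm v)⁻¹ • v) = 1 := by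
      rw [vnorm_smul, abs_of_pos (by positivity)]
      field_simp
    have := le_specNorm_of M ((vnorm v)⁻¹ • v) (le_of_eq h1)
    rw [Matrix.mulVec_smul, vnorm_smul, abs_of_pos (by positivity)] at this
    calc vnorm (M.mulVec v) = vnorm v * ((vnorm v)⁻¹ * vnorm (M.mulVec v)) := by field_simp
    _ ≤ vnorm v * specNorm M := by nlinarith
    _ = specNorm M * vnorm v := mul_comm _ _

lemma abs_le_specNorm (M : Mat d) (i j : Fin d) : |M i j| ≤ specNorm M := by
  have h1 : vnorm (Pi.single j (1:ℝ) : Fin d → ℝ) ≤ 1 := by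
    rw [vnorm]
    have : (∑ k, (Pi.single j (1:ℝ) : Fin d → ℝ) k ^ 2) = 1 := by
      simp [Pi.single_apply]
    rw [this, Real.sqrt_one]
  have h2 := le_specNorm_of M _ h1
  rw [Matrix.mulVec_single] at h2
  refine le_trans ?_ h2
  have := abs_le_vnorm (M.col j) i
  simpa using this

lemma normInf_le_specNorm (M : Mat d) : normInf M ≤ specNorm M := by
  rcases Nat.eq_zero_or_pos d with rfl | hd
  · simp only [normInf]
    rw [Real.iSup_of_isEmpty]
    exact specNorm_nonneg M
  · haveI : Nonempty (Fin d) := ⟨⟨0, hd⟩⟩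
    apply ciSup_le
    rintro ⟨i, j⟩
    exact abs_le_specNorm M i j

lemma abs_le_normInf (M : Mat d) (i j : Fin d) : |M i j| ≤ normInf M :=
  le_ciSup (f := fun p : Fin d × Fin d => |M p.1 p.2|)
    (Set.Finite.bddAbove (Set.finite_range _)) (i, j)

lemma normInf_nonneg (M : Mat d) : 0 ≤ normInf M := by
  rcases Nat.eq_zero_or_pos d with rfl | hd
  · simp [normInf, Real.iSup_of_isEmpty]
  · haveI : Nonempty (Fin d) := ⟨⟨0, hd⟩⟩
    exact (abs_nonneg _).trans (abs_le_normInf M ⟨0, hd⟩ ⟨0, hd⟩)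

lemma specNorm_pos (M : Mat d) (hM : M ≠ 0) : 0 < specNorm M := by
  have : ∃ i j, M i j ≠ 0 := by
    by_contra h
    push_neg at h
    exact hM (by ext i j; simp [h i j])
  obtain ⟨i, j, hij⟩ := this
  exact lt_of_lt_of_le (abs_pos.2 hij) (abs_le_specNorm M i j)

lemma norm1_le (M : Mat d) : norm1 M ≤ (d:ℝ)^2 * normInf M := by
  calc norm1 M ≤ ∑ _i : Fin d, ∑ _j : Fin d, normInf M := by
        apply Finset.sum_le_sum; intro i _; apply Finset.sum_le_sum; intro j _
        exact abs_le_normInf M i j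
  _ = (d:ℝ)^2 * normInf M := by simp [sq]; ring

lemma normInf_add (A B : Mat d) : normInf (A + B) ≤ normInf A + normInf B := by
  rcases Nat.eq_zero_or_pos d with rfl | hd
  · simp [normInf, Real.iSup_of_isEmpty]
  · haveI : Nonempty (Fin d) := ⟨⟨0, hd⟩⟩
    apply ciSup_le
    rintro ⟨i, j⟩
    calc |(A + B) i j| ≤ |A i j| + |B i j| := abs_add_le _ _
    _ ≤ normInf A + normInf B := add_le_add (abs_le_normInf A i j) (abs_le_normInf B i j)

lemma specNorm_add (A B : Mat d) : specNorm (A + B) ≤ specNorm A + specNorm B := by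
  apply specNorm_le
  intro v hv
  rw [Matrix.add_mulVec]
  calc vnorm (A.mulVec v + B.mulVec v) ≤ vnorm (A.mulVec v) + vnorm (B.mulVec v) := vnorm_add _ _
  _ ≤ specNorm A * vnorm v + specNorm B * vnorm v :=
      add_le_add (vnorm_mulVec_le A v) (vnorm_mulVec_le B v)
  _ ≤ specNorm A + specNorm B := by
      nlinarith [specNorm_nonneg A, specNorm_nonneg B, vnorm_nonneg v]

lemma specNorm_smul (c : ℝ) (M : Mat d) : specNorm (c • M) = |c| * specNorm M := by
  rcases eq_or_ne c 0 with rfl | hc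
  · simp only [zero_smul, abs_zero, zero_mul]
    exact le_antisymm (specNorm_le _ 0 (by intro v hv; simp [Matrix.zero_mulVec, vnorm_zero]))
      (specNorm_nonneg 0)
  · apply le_antisymm
    · apply specNorm_le
      intro v hv
      rw [Matrix.smul_mulVec, vnorm_smul]
      apply mul_le_mul_of_nonneg_left _ (abs_nonneg c)
      calc vnorm (M.mulVec v) ≤ specNorm M * vnorm v := vnorm_mulVec_le M v
      _ ≤ specNorm M := by nlinarith [specNorm_nonneg M, vnorm_nonneg v]
    · have h2 : specNorm M ≤ |c|⁻¹ * specNorm (c • M) := by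
        apply specNorm_le
        intro v hv
        have := le_specNorm_of (c • M) v hv
        rw [Matrix.smul_mulVec, vnorm_smul] at this
        rw [← inv_mul_cancel_left₀ (abs_ne_zero.2 hc) (vnorm (M.mulVec v))]
        apply mul_le_mul_of_nonneg_left this (by positivity)
      calc |c| * specNorm M ≤ |c| * (|c|⁻¹ * specNorm (c • M)) :=
            mul_le_mul_of_nonneg_left h2 (abs_nonneg c)
      _ = specNorm (c • M) := by field_simp

lemma specNorm_zero : specNorm (0 : Mat d) = 0 := by
  have := specNorm_smul 0 (0 : Mat d)
  simpa using this

lemma specNorm_neg (M : Mat d) : specNorm (-M) = specNorm M := by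
  have := specNorm_smul (-1) M
  simpa using this

lemma specNorm_sub_le (A B : Mat d) : specNorm (A - B) ≤ specNorm A + specNorm B := by
  rw [sub_eq_add_neg]
  exact (specNorm_add A (-B)).trans (by rw [specNorm_neg])

lemma normInf_zero : normInf (0 : Mat d) = 0 :=
  le_antisymm (by simpa [specNorm_zero] using normInf_le_specNorm (0 : Mat d)) (normInf_nonneg 0)

lemma eq_zero_of_normInf (M : Mat d) (h : normInf M ≤ 0) : M = 0 := by
  ext i j
  have := abs_le_normInf M i j
  have : |M i j| ≤ 0 := this.trans h
  simpa using le_antisymm this (abs_nonneg _)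

lemma specNorm_mul_le (A B : Mat d) : specNorm (A * B) ≤ specNorm A * specNorm B := by
  apply specNorm_le
  intro v hv
  rw [← Matrix.mulVec_mulVec]
  calc vnorm (A.mulVec (B.mulVec v)) ≤ specNorm A * vnorm (B.mulVec v) := vnorm_mulVec_le _ _
  _ ≤ specNorm A * (specNorm B * vnorm v) :=
      mul_le_mul_of_nonneg_left (vnorm_mulVec_le _ _) (specNorm_nonneg A)
  _ ≤ specNorm A * specNorm B := by
      nlinarith [specNorm_nonneg A, specNorm_nonneg B, vnorm_nonneg v,
        mul_nonneg (specNorm_nonneg A) (specNorm_nonneg B)]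

lemma specNorm_transpose (M : Mat d) : specNorm Mᵀ = specNorm M := by
  have key : ∀ N : Mat d, specNorm Nᵀ ≤ specNorm N := by
    intro N
    apply specNorm_le
    intro v hv
    set w := Nᵀ.mulVec v with hw
    have hsq : vnorm w ^ 2 ≤ vnorm v * (specNorm N * vnorm w) := by
      rw [vnorm_sq]
      have h1 : w ⬝ᵥ w = v ⬝ᵥ N.mulVec w := by
        rw [Matrix.dotProduct_mulVec v N w, ← Matrix.mulVec_transpose]
      rw [h1]
      calc v ⬝ᵥ N.mulVec w ≤ |v ⬝ᵥ N.mulVec w| := le_abs_self _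
      _ ≤ vnorm v * vnorm (N.mulVec w) := abs_dot_le _ _
      _ ≤ vnorm v * (specNorm N * vnorm w) :=
          mul_le_mul_of_nonneg_left (vnorm_mulVec_le _ _) (vnorm_nonneg v)
    rcases eq_or_lt_of_le (vnorm_nonneg w) with h0 | h0
    · rw [← h0]; exact specNorm_nonneg N
    · have h3 : vnorm w ≤ vnorm v * specNorm N := by nlinarith
      calc vnorm w ≤ vnorm v * specNorm N := h3
      _ ≤ specNorm N := by nlinarith [specNorm_nonneg N]
  apply le_antisymm (key M)
  calc specNorm M = specNorm Mᵀᵀ := by rw [Matrix.transpose_transpose]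
  _ ≤ specNorm Mᵀ := key Mᵀ

lemma specNorm_idem_le_one (Q : Mat d) (hQ : Qᵀ * Q = Q) : specNorm Q ≤ 1 := by
  apply specNorm_le
  intro v hv
  have h1 : Q.mulVec v ⬝ᵥ Q.mulVec v = Q.mulVec v ⬝ᵥ v := by
    rw [Matrix.dotProduct_mulVec, ← Matrix.mulVec_transpose, Matrix.mulVec_mulVec, hQ]
  have hsq : vnorm (Q.mulVec v) ^ 2 ≤ vnorm (Q.mulVec v) * vnorm v := by
    rw [vnorm_sq, h1]
    calc Q.mulVec v ⬝ᵥ v ≤ |Q.mulVec v ⬝ᵥ v| := le_abs_self _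
    _ ≤ vnorm (Q.mulVec v) * vnorm v := abs_dot_le _ _
  nlinarith [vnorm_nonneg (Q.mulVec v), vnorm_nonneg v]

end AuxNorm

section AuxProj

variable {d : ℕ}

lemma minner_eq_sum (A B : Mat d) : minner A B = ∑ j, ∑ i, A i j * B i j := by
  simp [minner, Matrix.trace, Matrix.mul_apply, Matrix.diag, Matrix.transpose_apply]

lemma minner_add_right (A B C : Mat d) : minner A (B + C) = minner A B + minner A C := by
  simp [minner, Matrix.mul_add]

lemma minner_smul_right (c : ℝ) (A B : Mat d) : minner A (c • B) = c * minner A B := by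
  simp [minner, Matrix.mul_smul]

lemma minner_zero_left (B : Mat d) : minner 0 B = 0 := by
  simp [minner]

lemma inner_matEuclid (A B : Mat d) :
    (inner ℝ ((matEuclid d) A) ((matEuclid d) B) : ℝ) = minner A B := by
  rw [PiLp.inner_apply, minner_eq_sum, Fintype.sum_prod_type]
  rw [Finset.sum_comm]
  apply Finset.sum_congr rfl
  intro j _
  apply Finset.sum_congr rfl
  intro i _
  simp [matEuclid, RCLike.inner_apply]
  exact mul_comm _ _

lemma proj_mem (V : Submodule ℝ (Mat d)) (M : Mat d) : proj V M ∈ V := by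
  have h := (Submodule.orthogonalProjectionOnto
    (V.map ((matEuclid d) : Mat d →ₗ[ℝ] EuclideanSpace ℝ (Fin d × Fin d)))
    ((matEuclid d) M)).2
  obtain ⟨m, hm, hEm⟩ := h
  have : proj V M = m := by
    simp only [proj, ← hEm]
    exact (matEuclid d).symm_apply_apply m
  rw [this]; exact hm

lemma proj_eq_of (V : Submodule ℝ (Mat d)) (N m : Mat d) (hm : m ∈ V)
    (h : ∀ w ∈ V, minner (N - m) w = 0) : proj V N = m := by
  have key : (↑(Submodule.orthogonalProjectionOnto
      (V.map ((matEuclid d) : Mat d →ₗ[ℝ] EuclideanSpace ℝ (Fin d × Fin d)))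
      ((matEuclid d) N)) : EuclideanSpace ℝ (Fin d × Fin d)) = (matEuclid d) m := by
    rw [← Submodule.starProjection_apply]
    apply Submodule.eq_starProjection_of_mem_of_inner_eq_zero
    · exact Submodule.mem_map_of_mem hm
    · rintro w ⟨w', hw', rfl⟩
      have : (matEuclid d) N - (matEuclid d) m = (matEuclid d) (N - m) := (map_sub _ _ _).symm
      rw [show ((matEuclid d) : Mat d →ₗ[ℝ] EuclideanSpace ℝ (Fin d × Fin d)) w'
          = (matEuclid d) w' from rfl, this, inner_matEuclid]
      exact h w' hw'
  simp only [proj, key]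
  exact (matEuclid d).symm_apply_apply m

lemma proj_of_mem (V : Submodule ℝ (Mat d)) (M : Mat d) (hM : M ∈ V) : proj V M = M :=
  proj_eq_of V M M hM (by intro w _; simp [minner_zero_left])

lemma proj_smul (V : Submodule ℝ (Mat d)) (c : ℝ) (M : Mat d) :
    proj V (c • M) = c • proj V M := by
  simp only [proj, _root_.map_smul, SetLike.val_smul]

lemma proj_zero (V : Submodule ℝ (Mat d)) : proj V (0 : Mat d) = 0 := by
  simp [proj, map_zero]

lemma minner_skew_symm_zero (A w : Mat d) (hA : Aᵀ = -A) (hw : wᵀ = w) : minner A w = 0 := by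
  have h1 : minner A w = -(A * w).trace := by
    rw [minner, hA]; simp [Matrix.neg_mul]
  have h2 : minner A w = (A * w).trace := by
    rw [minner, ← Matrix.trace_transpose (Aᵀ * w), Matrix.transpose_mul,
      Matrix.transpose_transpose, hw, Matrix.trace_mul_comm]
  rw [h2] at h1
  linarith [h1]

lemma minner_TSpace_zero {r : ℕ} (U : Matrix (Fin d) (Fin r) ℝ) (C : Mat d)
    (h1 : Cᵀ * U = 0) (h2 : C * U = 0) : ∀ w ∈ TSpace U, minner C w = 0 := by
  rintro w ⟨X, rfl⟩
  rw [minner, Matrix.mul_add, Matrix.trace_add]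
  have t1 : Cᵀ * (U * Xᵀ) = 0 := by rw [← Matrix.mul_assoc, h1, Matrix.zero_mul]
  have t2 : (Cᵀ * (X * Uᵀ)).trace = 0 := by
    rw [Matrix.trace_mul_comm, Matrix.mul_assoc]
    have : Uᵀ * Cᵀ = 0 := by
      have := congrArg Matrix.transpose h2
      simpa [Matrix.transpose_mul] using this
    rw [this, Matrix.mul_zero, Matrix.trace_zero]
  rw [t1, t2, Matrix.trace_zero, add_zero]

/-- The explicit formula for orthogonal projection onto a tangent space `T(U)`. -/
lemma proj_TSpace {r : ℕ} (U : Matrix (Fin d) (Fin r) ℝ) (hU : Uᵀ * U = 1) (N : Mat d) :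
    proj (TSpace U) N =
      U * Uᵀ * ((2⁻¹ : ℝ) • (N + Nᵀ)) + ((2⁻¹ : ℝ) • (N + Nᵀ)) * (U * Uᵀ)
        - U * Uᵀ * ((2⁻¹ : ℝ) • (N + Nᵀ)) * (U * Uᵀ) := by
  set S : Mat d := (2⁻¹ : ℝ) • (N + Nᵀ) with hSdef
  have hS : Sᵀ = S := by
    rw [hSdef, Matrix.transpose_smul, Matrix.transpose_add, Matrix.transpose_transpose, add_comm]
  set m : Mat d := U * Uᵀ * S + S * (U * Uᵀ) - U * Uᵀ * S * (U * Uᵀ) with hmdef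
  have hPU : U * Uᵀ * S * U = U * (Uᵀ * S * U) := by
    simp [Matrix.mul_assoc]
  have hmU : m * U = S * U := by
    rw [hmdef]
    simp only [Matrix.sub_mul, Matrix.add_mul]
    have e1 : U * Uᵀ * S * (U * Uᵀ) * U = U * Uᵀ * S * U := by
      simp only [Matrix.mul_assoc, hU, Matrix.mul_one]
    have e2 : S * (U * Uᵀ) * U = S * U := by
      simp only [Matrix.mul_assoc, hU, Matrix.mul_one]
    rw [e1, e2]
    abel
  apply proj_eq_of
  · -- membership
    refine ⟨S * U - (2⁻¹ : ℝ) • (U * (Uᵀ * S * U)), ?_⟩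
    rw [hmdef]
    simp only [Matrix.transpose_sub, Matrix.transpose_smul, Matrix.transpose_mul,
      Matrix.transpose_transpose, hS, Matrix.mul_sub, Matrix.sub_mul,
      Matrix.mul_smul, Matrix.smul_mul, Matrix.mul_assoc]
    module
  · -- orthogonality
    intro w hw
    have hdecomp : N - m = (S - m) + (2⁻¹ : ℝ) • (N - Nᵀ) := by
      rw [hSdef]
      module
    rw [hdecomp]
    have hmul : ∀ A B : Mat d, minner (A + B) w = minner A w + minner B w := by
      intro A B
      simp [minner, Matrix.transpose_add, Matrix.add_mul]
    rw [hmul]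
    have hsymmres : minner (S - m) w = 0 := by
      apply minner_TSpace_zero U _ _ _ w hw
      · have hmT : mᵀ = m := by
          rw [hmdef]
          simp only [Matrix.transpose_sub, Matrix.transpose_add, Matrix.transpose_mul,
            Matrix.transpose_transpose, hS, Matrix.mul_assoc]
          abel
        rw [Matrix.transpose_sub, hS, hmT, Matrix.sub_mul, hmU, sub_self]
      · rw [Matrix.sub_mul, hmU, sub_self]
    have hskew : minner ((2⁻¹ : ℝ) • (N - Nᵀ)) w = 0 := by
      apply minner_skew_symm_zero
      · rw [Matrix.transpose_smul, Matrix.transpose_sub, Matrix.transpose_transpose]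
        rw [← smul_neg, neg_sub]
      · obtain ⟨X, rfl⟩ := hw
        simp [Matrix.transpose_add, Matrix.transpose_mul]
        abel
    rw [hsymmres, hskew, add_zero]

lemma specNorm_symmpart_le (N : Mat d) : specNorm ((2⁻¹ : ℝ) • (N + Nᵀ)) ≤ specNorm N := by
  rw [specNorm_smul]
  have h := specNorm_add N Nᵀ
  rw [specNorm_transpose] at h
  rw [abs_of_pos (by norm_num : (0:ℝ) < 2⁻¹)]
  linarith

lemma specNorm_proj_TSpace_le {r : ℕ} (U : Matrix (Fin d) (Fin r) ℝ) (hU : Uᵀ * U = 1)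
    (N : Mat d) : specNorm (proj (TSpace U) N) ≤ 2 * specNorm N := by
  rw [proj_TSpace U hU N]
  set S : Mat d := (2⁻¹ : ℝ) • (N + Nᵀ) with hSdef
  set P : Mat d := U * Uᵀ with hPdef
  have hP : specNorm P ≤ 1 := by
    apply specNorm_idem_le_one
    rw [hPdef]
    simp only [Matrix.transpose_mul, Matrix.transpose_transpose, Matrix.mul_assoc]
    rw [← Matrix.mul_assoc Uᵀ U Uᵀ, hU, Matrix.one_mul]
  have hQ : specNorm (1 - P) ≤ 1 := by
    apply specNorm_idem_le_one
    have hPT : Pᵀ = P := by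
      rw [hPdef, Matrix.transpose_mul, Matrix.transpose_transpose]
    have hPP : P * P = P := by
      rw [hPdef, Matrix.mul_assoc, ← Matrix.mul_assoc Uᵀ U Uᵀ, hU, Matrix.one_mul]
    simp only [Matrix.transpose_sub, Matrix.transpose_one, hPT, Matrix.sub_mul,
      Matrix.mul_sub, Matrix.one_mul, Matrix.mul_one, hPP]
    abel
  have hSle : specNorm S ≤ specNorm N := specNorm_symmpart_le N
  have hrw : P * S + S * P - P * S * P = P * S * (1 - P) + S * P := by
    rw [Matrix.mul_sub, Matrix.mul_one]
    abel
  rw [hrw]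
  have hS0 := specNorm_nonneg S
  have hN0 := specNorm_nonneg N
  have hP0 := specNorm_nonneg P
  calc specNorm (P * S * (1 - P) + S * P)
      ≤ specNorm (P * S * (1 - P)) + specNorm (S * P) := specNorm_add _ _
  _ ≤ specNorm (P * S) * specNorm (1 - P) + specNorm S * specNorm P :=
      add_le_add (specNorm_mul_le _ _) (specNorm_mul_le _ _)
  _ ≤ specNorm P * specNorm S * specNorm (1 - P) + specNorm S * specNorm P := by
      nlinarith [specNorm_mul_le P S, specNorm_nonneg (1 - P), specNorm_nonneg (P * S),
        mul_nonneg hP0 hS0]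
  _ ≤ 2 * specNorm N := by
      nlinarith [specNorm_nonneg (1 - P), mul_nonneg hP0 hS0]

end AuxProj

section AuxXiMu

variable {d : ℕ}

lemma normInf_pos (M : Mat d) (hM : M ≠ 0) : 0 < normInf M := by
  have : ∃ i j, M i j ≠ 0 := by
    by_contra h
    push_neg at h
    exact hM (by ext i j; simp [h i j])
  obtain ⟨i, j, hij⟩ := this
  exact lt_of_lt_of_le (abs_pos.2 hij) (abs_le_normInf M i j)

lemma normInf_neg (M : Mat d) : normInf (-M) = normInf M := by
  simp [normInf, Matrix.neg_apply, abs_neg]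

lemma xi_spec (T : Submodule ℝ (Mat d)) (M : Mat d) (hM : M ∈ T) :
    normInf M ≤ xi T * specNorm M := by
  have hne : {c | ∀ N ∈ T, normInf N ≤ c * specNorm N}.Nonempty :=
    ⟨1, fun N _ => by simpa using normInf_le_specNorm N⟩
  rcases eq_or_ne M 0 with rfl | hM0
  · rw [normInf_zero, specNorm_zero, mul_zero]
  · have h0 : 0 < specNorm M := specNorm_pos M hM0
    have h1 : normInf M / specNorm M ≤ xi T := by
      apply le_csInf hne
      intro c hc
      rw [div_le_iff₀ h0]
      exact hc M hM
    calc normInf M = (normInf M / specNorm M) * specNorm M := by field_simp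
    _ ≤ xi T * specNorm M := mul_le_mul_of_nonneg_right h1 h0.le

lemma xi_le_one (T : Submodule ℝ (Mat d)) (M₀ : Mat d) (hM₀ : M₀ ∈ T) (h0 : M₀ ≠ 0) :
    xi T ≤ 1 := by
  apply csInf_le
  · refine ⟨0, ?_⟩
    intro c hc
    have h1 := hc M₀ hM₀
    have h2 := normInf_pos M₀ h0
    have h3 := specNorm_pos M₀ h0
    nlinarith
  · intro N _
    simpa using normInf_le_specNorm N

lemma xi_nonneg (T : Submodule ℝ (Mat d)) (M₀ : Mat d) (hM₀ : M₀ ∈ T) (h0 : M₀ ≠ 0) :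
    0 ≤ xi T := by
  have hne : {c | ∀ N ∈ T, normInf N ≤ c * specNorm N}.Nonempty :=
    ⟨1, fun N _ => by simpa using normInf_le_specNorm N⟩
  apply le_csInf hne
  intro c hc
  have h1 := hc M₀ hM₀
  have h2 := normInf_pos M₀ h0
  have h3 := specNorm_pos M₀ h0
  nlinarith

lemma mu_spec (Om : Submodule ℝ (Mat d)) (N : Mat d) (hN : N ∈ Om) :
    specNorm N ≤ mu Om * normInf N := by
  have hne : {c | ∀ N ∈ Om, specNorm N ≤ c * normInf N}.Nonempty := by
    refine ⟨(d:ℝ)^2, fun N _ => ?_⟩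
    calc specNorm N ≤ norm1 N := specNorm_le_norm1 N
    _ ≤ (d:ℝ)^2 * normInf N := norm1_le N
  rcases eq_or_ne N 0 with rfl | hN0
  · rw [normInf_zero, specNorm_zero, mul_zero]
  · have h0 : 0 < normInf N := normInf_pos N hN0
    have h1 : specNorm N / normInf N ≤ mu Om := by
      apply le_csInf hne
      intro c hc
      rw [div_le_iff₀ h0]
      exact hc N hN
    calc specNorm N = (specNorm N / normInf N) * normInf N := by field_simp
    _ ≤ mu Om * normInf N := mul_le_mul_of_nonneg_right h1 h0.le

lemma mu_pos (Om : Submodule ℝ (Mat d)) (N₀ : Mat d) (hN₀ : N₀ ∈ Om) (h0 : N₀ ≠ 0) :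
    0 < mu Om := by
  have hne : {c | ∀ N ∈ Om, specNorm N ≤ c * normInf N}.Nonempty := by
    refine ⟨(d:ℝ)^2, fun N _ => ?_⟩
    calc specNorm N ≤ norm1 N := specNorm_le_norm1 N
    _ ≤ (d:ℝ)^2 * normInf N := norm1_le N
  have h2 := normInf_pos N₀ h0
  have h3 := specNorm_pos N₀ h0
  have h1 : specNorm N₀ / normInf N₀ ≤ mu Om := by
    apply le_csInf hne
    intro c hc
    rw [div_le_iff₀ h2]
    exact hc N₀ hN₀
  have : 0 < specNorm N₀ / normInf N₀ := by positivity
  linarith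

lemma rho_spec {r r' : ℕ} (U : Matrix (Fin d) (Fin r) ℝ) (U' : Matrix (Fin d) (Fin r') ℝ)
    (hU : Uᵀ * U = 1) (hU' : U'ᵀ * U' = 1) (X : Mat d) :
    specNorm (proj (TSpace U) X - proj (TSpace U') X)
      ≤ rho (TSpace U) (TSpace U') * specNorm X := by
  have hbdd : BddAbove {t | ∃ M : Mat d, specNorm M = 1 ∧
      t = specNorm (proj (TSpace U) M - proj (TSpace U') M)} := by
    refine ⟨4, ?_⟩
    rintro t ⟨M, hM, rfl⟩
    have h1 := specNorm_proj_TSpace_le U hU M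
    have h2 := specNorm_proj_TSpace_le U' hU' M
    have h3 := specNorm_sub_le (proj (TSpace U) M) (proj (TSpace U') M)
    rw [hM] at h1 h2
    linarith
  rcases eq_or_ne X 0 with rfl | hX
  · rw [proj_zero, proj_zero, sub_zero, specNorm_zero, mul_zero]
  · have hs : 0 < specNorm X := specNorm_pos X hX
    have hmem : specNorm ((specNorm X)⁻¹ • X) = 1 := by
      rw [specNorm_smul, abs_of_pos (by positivity)]
      field_simp
    have hel : specNorm (proj (TSpace U) ((specNorm X)⁻¹ • X)
        - proj (TSpace U') ((specNorm X)⁻¹ • X)) ≤ rho (TSpace U) (TSpace U') :=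
      le_csSup hbdd ⟨(specNorm X)⁻¹ • X, hmem, rfl⟩
    rw [proj_smul, proj_smul, ← smul_sub, specNorm_smul,
      abs_of_pos (by positivity : (0:ℝ) < (specNorm X)⁻¹)] at hel
    calc specNorm (proj (TSpace U) X - proj (TSpace U') X)
        = specNorm X * ((specNorm X)⁻¹
            * specNorm (proj (TSpace U) X - proj (TSpace U') X)) := by field_simp
    _ ≤ specNorm X * rho (TSpace U) (TSpace U') := mul_le_mul_of_nonneg_left hel hs.le
    _ = rho (TSpace U) (TSpace U') * specNorm X := mul_comm _ _

end AuxXiMu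

section AuxHess

variable {d : ℕ}

lemma hessA_add (Θ M N : Mat d) : hessA Θ (M + N) = hessA Θ M + hessA Θ N := by
  simp only [hessA, minner_add_right, mul_add, add_smul, Finset.sum_add_distrib]
  abel

lemma hessA_smul (Θ : Mat d) (c : ℝ) (M : Mat d) : hessA Θ (c • M) = c • hessA Θ M := by
  simp only [hessA, minner_smul_right, smul_sub, Finset.smul_sum, smul_smul]
  congr 1
  apply Finset.sum_congr rfl
  intro x _
  congr 1
  ring

lemma normInf_le_normE (M : Mat d) : normInf M ≤ ‖(matEuclid d) M‖ := by
  rcases Nat.eq_zero_or_pos d with rfl | hd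
  · simp only [normInf]
    rw [Real.iSup_of_isEmpty]
    exact norm_nonneg _
  · haveI : Nonempty (Fin d) := ⟨⟨0, hd⟩⟩
    apply ciSup_le
    rintro ⟨i, j⟩
    rw [EuclideanSpace.norm_eq, ← Real.sqrt_sq_eq_abs]
    apply Real.sqrt_le_sqrt
    have h := Finset.single_le_sum (f := fun p : Fin d × Fin d => ‖(matEuclid d) M p‖ ^ 2)
      (fun p _ => by positivity) (Finset.mem_univ (i, j))
    have he : ‖(matEuclid d) M (i, j)‖ ^ 2 = |M i j| ^ 2 := by
      simp [matEuclid, Real.norm_eq_abs]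
      rfl
    simp only at h
    rw [he] at h
    simpa [sq_abs] using h

lemma normE_le_normInf (M : Mat d) : ‖(matEuclid d) M‖ ≤ (d:ℝ) * normInf M := by
  rw [EuclideanSpace.norm_eq]
  have h1 : (∑ p : Fin d × Fin d, ‖(matEuclid d) M p‖ ^ 2) ≤ ((d:ℝ) * normInf M)^2 := by
    have h2 : ∀ p : Fin d × Fin d, ‖(matEuclid d) M p‖ ^ 2 ≤ normInf M ^ 2 := by
      rintro ⟨i, j⟩
      have ha : ‖(matEuclid d) M (i, j)‖ = |M i j| := by
        simp [matEuclid, Real.norm_eq_abs]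
        rfl
      rw [ha]
      have := abs_le_normInf M i j
      nlinarith [abs_nonneg (M i j)]
    calc (∑ p : Fin d × Fin d, ‖(matEuclid d) M p‖ ^ 2)
        ≤ ∑ _p : Fin d × Fin d, normInf M ^ 2 := Finset.sum_le_sum (fun p _ => h2 p)
    _ = ((d:ℝ) * normInf M)^2 := by
        rw [Finset.sum_const]
        simp [Finset.card_univ]
        ring
  calc Real.sqrt (∑ p : Fin d × Fin d, ‖(matEuclid d) M p‖ ^ 2)
      ≤ Real.sqrt (((d:ℝ) * normInf M)^2) := Real.sqrt_le_sqrt h1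
  _ = (d:ℝ) * normInf M := Real.sqrt_sq (mul_nonneg (by positivity) (normInf_nonneg M))

lemma hessA_specNorm_bound (Θ : Mat d) : ∃ K : ℝ, 0 ≤ K ∧ ∀ M : Mat d,
    specNorm (hessA Θ M) ≤ K * specNorm M := by
  set Hl : Mat d →ₗ[ℝ] Mat d :=
    { toFun := hessA Θ
      map_add' := hessA_add Θ
      map_smul' := fun c M => hessA_smul Θ c M } with hHl
  set Hc : EuclideanSpace ℝ (Fin d × Fin d) →L[ℝ] EuclideanSpace ℝ (Fin d × Fin d) :=
    LinearMap.toContinuousLinearMap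
      ((((matEuclid d) : Mat d →ₗ[ℝ] EuclideanSpace ℝ (Fin d × Fin d)).comp Hl).comp
        (((matEuclid d).symm : EuclideanSpace ℝ (Fin d × Fin d) ≃ₗ[ℝ] Mat d)
          : EuclideanSpace ℝ (Fin d × Fin d) →ₗ[ℝ] Mat d)) with hHc
  refine ⟨(d:ℝ)^2 * ‖Hc‖ * (d:ℝ), by positivity, fun M => ?_⟩
  have happ : Hc ((matEuclid d) M) = (matEuclid d) (hessA Θ M) := by
    rw [hHc, LinearMap.coe_toContinuousLinearMap']
    simp only [LinearMap.coe_comp, Function.comp_apply, LinearEquiv.coe_coe]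
    rw [(matEuclid d).symm_apply_apply]
    rfl
  have key : ‖(matEuclid d) (hessA Θ M)‖ ≤ ‖Hc‖ * ‖(matEuclid d) M‖ := by
    rw [← happ]
    exact Hc.le_opNorm _
  have c1 : specNorm (hessA Θ M) ≤ (d:ℝ)^2 * normInf (hessA Θ M) :=
    (specNorm_le_norm1 _).trans (norm1_le _)
  have c2 : normInf (hessA Θ M) ≤ ‖(matEuclid d) (hessA Θ M)‖ := normInf_le_normE _
  have c3 : ‖(matEuclid d) M‖ ≤ (d:ℝ) * normInf M := normE_le_normInf M
  have c4 : normInf M ≤ specNorm M := normInf_le_specNorm M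
  have hd0 : (0:ℝ) ≤ (d:ℝ)^2 := by positivity
  have hHc0 : (0:ℝ) ≤ ‖Hc‖ := norm_nonneg _
  calc specNorm (hessA Θ M) ≤ (d:ℝ)^2 * normInf (hessA Θ M) := c1
  _ ≤ (d:ℝ)^2 * (‖Hc‖ * ‖(matEuclid d) M‖) :=
      mul_le_mul_of_nonneg_left (c2.trans key) hd0
  _ ≤ (d:ℝ)^2 * (‖Hc‖ * ((d:ℝ) * specNorm M)) := by
      have h5 : ‖(matEuclid d) M‖ ≤ (d:ℝ) * specNorm M := by
        calc ‖(matEuclid d) M‖ ≤ (d:ℝ) * normInf M := c3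
        _ ≤ (d:ℝ) * specNorm M := mul_le_mul_of_nonneg_left c4 (by positivity)
      exact mul_le_mul_of_nonneg_left (mul_le_mul_of_nonneg_left h5 hHc0) hd0
  _ = (d:ℝ)^2 * ‖Hc‖ * (d:ℝ) * specNorm M := by ring

lemma TSpace_nonzero {r : ℕ} (hr : 1 ≤ r) (U : Matrix (Fin d) (Fin r) ℝ)
    (hU : Uᵀ * U = 1) : ∃ M₀, M₀ ∈ TSpace U ∧ M₀ ≠ 0 := by
  refine ⟨U * Uᵀ + U * Uᵀ, ⟨U, rfl⟩, ?_⟩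
  intro h
  have htr : (U * Uᵀ + U * Uᵀ).trace = 2 * (r:ℝ) := by
    rw [Matrix.trace_add, Matrix.trace_mul_comm, hU, Matrix.trace_one]
    simp
    ring
  rw [h, Matrix.trace_zero] at htr
  have h1 : (1:ℝ) ≤ (r:ℝ) := by exact_mod_cast hr
  linarith [htr]

end AuxHess

/-- The setup: a nonzero symmetric matrix `S*` and a positive-semidefinite `L*` with
restricted eigenvalue decomposition `L* = U D Uᵀ` (so `L*` has rank `r`). -/
structure Setup (d r : ℕ) where
  Sstar : Mat d
  U : Matrix (Fin d) (Fin r) ℝ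
  Dg : Matrix (Fin r) (Fin r) ℝ
  hU : Uᵀ * U = 1
  hDdiag : Dg.IsDiag
  hDunit : IsUnit Dg.det
  hSsymm : Sstar.IsSymm
  hSne : Sstar ≠ 0
  hLpsd : (U * Dg * Uᵀ).PosSemidef

namespace Setup

variable {d r : ℕ} (C : Setup d r)

/-- `L* = U D Uᵀ`. -/
def Lstar : Mat d := C.U * C.Dg * C.Uᵀ

/-- `Θ* = S* + L*`. -/
def Thstar : Mat d := C.Sstar + C.Lstar

/-- `Ω = Ω(S*)`. -/
def Om : Submodule ℝ (Mat d) := OmegaS C.Sstar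

/-- `T = T(L*)`. -/
def Tt : Submodule ℝ (Mat d) := TSpace C.U

/-- `H* = ∇²a(Θ*)`, the Hessian of the log-partition function at `Θ*`. -/
def Hop : Mat d → Mat d := hessA C.Thstar

/-- `‖H*‖`, the operator norm of `H*` w.r.t. the spectral norm. -/
def HopNorm : ℝ := sSup {t | ∃ M : Mat d, specNorm M = 1 ∧ t = specNorm (C.Hop M)}

/-- `ξ(T)`. -/
def xiT : ℝ := xi C.Tt

/-- `μ(Ω)`. -/
def muOm : ℝ := mu C.Om

/-- `α_Ω = min {‖P_Ω H*(M)‖_∞ : M ∈ Ω, ‖M‖_∞ = 1}`. -/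
def alphaOm : ℝ :=
  sInf {t | ∃ M, M ∈ C.Om ∧ normInf M = 1 ∧ t = normInf (proj C.Om (C.Hop M))}

/-- `α_{T,ε}`. -/
def alphaT (ε : ℝ) : ℝ :=
  sInf {t | ∃ T' : Submodule ℝ (Mat d), IsTangentSpace d r T' ∧ rho C.Tt T' ≤ ε ∧
    ∃ M, M ∈ T' ∧ specNorm M = 1 ∧ t = specNorm (proj T' (C.Hop M))}

/-- `δ_Ω = max {‖P_{Ω^⊥} H*(M)‖_∞ : M ∈ Ω, ‖M‖_∞ = 1}`. -/
def deltaOm : ℝ :=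
  sSup {t | ∃ M, M ∈ C.Om ∧ normInf M = 1 ∧ t = normInf (projPerp C.Om (C.Hop M))}

/-- `δ_{T,ε}`. -/
def deltaT (ε : ℝ) : ℝ :=
  sSup {t | ∃ T' : Submodule ℝ (Mat d), IsTangentSpace d r T' ∧ rho C.Tt T' ≤ ε ∧
    ∃ M, M ∈ T' ∧ specNorm M = 1 ∧ t = specNorm (projPerp T' (C.Hop M))}

/-- `β_Ω = max {‖H*(M)‖ : M ∈ Ω, ‖M‖ = 1}`. -/
def betaOm : ℝ :=
  sSup {t | ∃ M, M ∈ C.Om ∧ specNorm M = 1 ∧ t = specNorm (C.Hop M)}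

/-- `β_T`. -/
def betaT : ℝ :=
  sSup {t | ∃ T' : Submodule ℝ (Mat d), IsTangentSpace d r T' ∧ rho C.Tt T' ≤ C.xiT / 2 ∧
    ∃ M, M ∈ T' ∧ normInf M = 1 ∧ t = normInf (C.Hop M)}

/-- `β = max {β_Ω, β_T}`. -/
def betaC : ℝ := max C.betaOm C.betaT

/-- `α = min {α_Ω, α_{T,ξ(T)/2}}`. -/
def alphaC : ℝ := min C.alphaOm (C.alphaT (C.xiT / 2))

/-- `δ = max {δ_Ω, δ_{T,ξ(T)/2}}`. -/
def deltaC : ℝ := max C.deltaOm (C.deltaT (C.xiT / 2))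

/-- The stability assumption: `α > 0` and `δ/α ≤ 1 - 2ν` for some `ν ∈ (0, 1/2]`. -/
def Stability (ν : ℝ) : Prop :=
  0 < C.alphaC ∧ 0 < ν ∧ ν ≤ 1 / 2 ∧ C.deltaC / C.alphaC ≤ 1 - 2 * ν

/-- `γ_min = 3β(2-ν)ξ(T)/(να)`. -/
def gammaMin (ν : ℝ) : ℝ := 3 * C.betaC * (2 - ν) * C.xiT / (ν * C.alphaC)

/-- `γ_max = να/(2β(2-ν)μ(Ω))`. -/
def gammaMax (ν : ℝ) : ℝ := ν * C.alphaC / (2 * C.betaC * (2 - ν) * C.muOm)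

/-- The `γ`-feasibility assumption: the range `[γ_min, γ_max]` is non-empty. -/
def GammaFeasible (ν : ℝ) : Prop := C.gammaMin ν ≤ C.gammaMax ν

/-- `ω = max {να/(3β(2-ν)), 1}`. -/
def omg (ν : ℝ) : ℝ := max (ν * C.alphaC / (3 * C.betaC * (2 - ν))) 1

/-- `c₂ = 40/α + 1/‖H*‖`. -/
def c2 : ℝ := 40 / C.alphaC + 1 / C.HopNorm

/-- `c₃ = (6(2-ν)/ν + 1) c₂² ‖H*‖ ω`. -/
def c3 (ν : ℝ) : ℝ := (6 * (2 - ν) / ν + 1) * C.c2 ^ 2 * C.HopNorm * C.omg ν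

/-- `c₄ = c₂ + 3αc₂²(2-ν)/(16(3-ν))`. -/
def c4 (ν : ℝ) : ℝ := C.c2 + 3 * C.alphaC * C.c2 ^ 2 * (2 - ν) / (16 * (3 - ν))

/-- `c₅ = max {c₃, c₄}`. -/
def c5 (ν : ℝ) : ℝ := max (C.c3 ν) (C.c4 ν)

/-- `c₆ = ναc₂/(2β(2-ν))`. -/
def c6 (ν : ℝ) : ℝ := ν * C.alphaC * C.c2 / (2 * C.betaC * (2 - ν))

/-- `c₀ = 2 l(r₀) ω max{να/(2β(2-ν)), 1}²`. -/
def c0 (ν l0 : ℝ) : ℝ :=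
  2 * l0 * C.omg ν * (max (ν * C.alphaC / (2 * C.betaC * (2 - ν))) 1) ^ 2

/-- `c₁ = max{1, να/(2β(2-ν))}⁻¹ r₀/2`. -/
def c1 (ν r0 : ℝ) : ℝ :=
  (max 1 (ν * C.alphaC / (2 * C.betaC * (2 - ν))))⁻¹ * r0 / 2

/-- `s_min`, the smallest absolute value of a nonzero entry of `S*`. -/
def smin : ℝ := sInf {t | ∃ i j, C.Sstar i j ≠ 0 ∧ t = |C.Sstar i j|}

/-- `σ_min`, the smallest nonzero eigenvalue of `L*`. -/
def sigmin : ℝ := sInf {t | t ≠ 0 ∧ ∃ i, t = C.hLpsd.1.eigenvalues i}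

/-- The gap assumption: `s_min ≥ c₆λ_n/μ(Ω)` and `σ_min ≥ c₅λ_n/ξ(T)²`. -/
def GapAssumption (ν lam : ℝ) : Prop :=
  C.c6 ν * lam / C.muOm ≤ C.smin ∧ C.c5 ν * lam / C.xiT ^ 2 ≤ C.sigmin

/-- `l0` is a Lipschitz constant (in operator norm w.r.t. the spectral norm) of the
Hessian `∇²a` on the ball `{Θ : ‖Θ - Θ*‖ ≤ r0}`. -/
def HessLip (r0 l0 : ℝ) : Prop :=
  ∀ Θ Θ' : Mat d, specNorm (Θ - C.Thstar) ≤ r0 → specNorm (Θ' - C.Thstar) ≤ r0 →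
    ∀ M : Mat d, specNorm (hessA Θ M - hessA Θ' M) ≤ l0 * specNorm (Θ - Θ') * specNorm M

/-- The correct model set `M`. -/
def Mset (γ ν lam : ℝ) : Set (Mat d × Mat d) :=
  {p | p.1 ∈ C.Om ∧ p.2.IsSymm ∧ p.2.rank ≤ C.Lstar.rank ∧
    ganorm γ (C.Hop ((p.1 - C.Sstar) + (p.2 - C.Lstar)))
      (C.Hop ((p.1 - C.Sstar) + (p.2 - C.Lstar))) ≤ 9 * lam ∧
    specNorm (projPerp C.Tt (p.2 - C.Lstar)) ≤ C.xiT * lam / (C.omg ν * C.HopNorm)}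

end Setup

set_option maxHeartbeats 1000000 in
/-- transversality: under the stability and γ-feasibility assumptions,
for every tangent space `T' = T(L')` at a rank-`r` symmetric matrix `L'` with
`ρ(T,T') ≤ ξ(T)/2` it holds `Ω ∩ T' = {0}`. -/
theorem transversality (d r : ℕ) (hd : 1 ≤ d) (hr : 1 ≤ r)
    (C : Setup d r) (ν : ℝ) (hstab : C.Stability ν) (hfeas : C.GammaFeasible ν) :
    ∀ T' : Submodule ℝ (Mat d), IsTangentSpace d r T' → rho C.Tt T' ≤ C.xiT / 2 →
      C.Om ⊓ T' = ⊥ := by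
  intro T' hTan hrho
  rw [eq_bot_iff]
  intro M hM
  rw [Submodule.mem_bot]
  by_contra hM0
  obtain ⟨hMom, hMT'⟩ := Submodule.mem_inf.1 hM
  obtain ⟨hA, hν0, hν2, _⟩ := hstab
  obtain ⟨U', D', hU', hD1', hD2', hT'eq⟩ := hTan
  subst hT'eq
  have hs : 0 < specNorm M := specNorm_pos M hM0
  have hTt : C.Tt = TSpace C.U := rfl
  -- ξ facts
  obtain ⟨M₀, hM₀T, hM₀0⟩ := TSpace_nonzero hr C.U C.hU
  have hX1 : C.xiT ≤ 1 := xi_le_one (TSpace C.U) M₀ hM₀T hM₀0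
  have hX0 : 0 ≤ C.xiT := xi_nonneg (TSpace C.U) M₀ hM₀T hM₀0
  -- μ facts
  have hSOm : C.Sstar ∈ C.Om := ⟨C.hSsymm, fun i j h => h⟩
  have hMu : 0 < C.muOm := mu_pos C.Om C.Sstar hSOm C.hSne
  -- chain 1 : normInf M ≤ 2 ξ ‖M‖
  have hrs : specNorm (proj C.Tt M - proj (TSpace U') M) ≤ (C.xiT / 2) * specNorm M := by
    have h := rho_spec C.U U' C.hU hU' M
    rw [← hTt] at h
    calc specNorm (proj C.Tt M - proj (TSpace U') M)
        ≤ rho C.Tt (TSpace U') * specNorm M := h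
    _ ≤ (C.xiT / 2) * specNorm M := mul_le_mul_of_nonneg_right hrho hs.le
  have hPT'M : proj (TSpace U') M = M := proj_of_mem _ M hMT'
  have h1 : specNorm (proj C.Tt M) ≤ specNorm M + (C.xiT / 2) * specNorm M := by
    have he : proj C.Tt M = (proj C.Tt M - proj (TSpace U') M) + M := by
      rw [hPT'M]; abel
    rw [he]
    exact (specNorm_add _ _).trans (by linarith [hrs])
  have h2 : normInf (proj C.Tt M) ≤ C.xiT * specNorm (proj C.Tt M) :=
    xi_spec C.Tt _ (proj_mem _ _)
  have h3 : normInf (M - proj C.Tt M) ≤ (C.xiT / 2) * specNorm M := by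
    have he : M - proj C.Tt M = -(proj C.Tt M - proj (TSpace U') M) := by
      rw [hPT'M]; abel
    rw [he, normInf_neg]
    exact (normInf_le_specNorm _).trans hrs
  have h4 : normInf M ≤ normInf (proj C.Tt M) + normInf (M - proj C.Tt M) := by
    have he : M = proj C.Tt M + (M - proj C.Tt M) := by abel
    calc normInf M = normInf (proj C.Tt M + (M - proj C.Tt M)) := by rw [← he]
    _ ≤ _ := normInf_add _ _
  have hchain : normInf M ≤ 2 * C.xiT * specNorm M := by
    nlinarith [h1, h2, h3, h4, hX0, hX1, hs.le, specNorm_nonneg (proj C.Tt M),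
      mul_nonneg (mul_nonneg (sub_nonneg.2 hX1) hX0) hs.le]
  have hmu : specNorm M ≤ C.muOm * normInf M := mu_spec C.Om M hMom
  have hone : 1 ≤ 2 * C.muOm * C.xiT := by
    nlinarith [hchain, hmu, hs, hMu, hX0]
  -- chain 2 : α ≤ 2 β
  have hMhatT' : ((specNorm M)⁻¹ • M) ∈ TSpace U' := Submodule.smul_mem _ _ hMT'
  have hMhatOm : ((specNorm M)⁻¹ • M) ∈ C.Om := Submodule.smul_mem _ _ hMom
  have hMhat1 : specNorm ((specNorm M)⁻¹ • M) = 1 := by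
    rw [specNorm_smul, abs_of_pos (by positivity)]
    field_simp
  have ha1 : C.alphaC ≤ C.alphaT (C.xiT / 2) := min_le_right _ _
  have ha2 : C.alphaT (C.xiT / 2)
      ≤ specNorm (proj (TSpace U') (C.Hop ((specNorm M)⁻¹ • M))) := by
    apply csInf_le
    · refine ⟨0, ?_⟩
      rintro t ⟨T'', _, _, N, _, _, rfl⟩
      exact specNorm_nonneg _
    · exact ⟨TSpace U', ⟨U', D', hU', hD1', hD2', rfl⟩, hrho,
        (specNorm M)⁻¹ • M, hMhatT', hMhat1, rfl⟩
  have ha3 : specNorm (proj (TSpace U') (C.Hop ((specNorm M)⁻¹ • M)))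
      ≤ 2 * specNorm (C.Hop ((specNorm M)⁻¹ • M)) :=
    specNorm_proj_TSpace_le U' hU' _
  obtain ⟨K, hK0, hK⟩ := hessA_specNorm_bound C.Thstar
  have ha4 : specNorm (C.Hop ((specNorm M)⁻¹ • M)) ≤ C.betaOm := by
    apply le_csSup
    · refine ⟨K, ?_⟩
      rintro t ⟨N, _, h1', rfl⟩
      have := hK N
      rw [h1', mul_one] at this
      exact this
    · exact ⟨(specNorm M)⁻¹ • M, hMhatOm, hMhat1, rfl⟩
  have ha5 : C.betaOm ≤ C.betaC := le_max_left _ _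
  have hab : C.alphaC ≤ 2 * C.betaC := by
    have := ((ha1.trans ha2).trans ha3)
    nlinarith [ha4, ha5]
  have hB : 0 < C.betaC := by linarith
  -- feasibility arithmetic
  have h2ν : (0:ℝ) < 2 - ν := by linarith
  have hf : 3 * C.betaC * (2 - ν) * C.xiT / (ν * C.alphaC)
      ≤ ν * C.alphaC / (2 * C.betaC * (2 - ν) * C.muOm) := hfeas
  rw [div_le_div_iff₀ (mul_pos hν0 hA)
    (mul_pos (mul_pos (mul_pos two_pos hB) h2ν) hMu)] at hf
  -- hf : 3βB(2-ν)ξ * (2β(2-ν)μ) ≤ να * (να)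
  have hνA : ν * C.alphaC ≤ C.alphaC / 2 := by nlinarith
  have hνB : ν * C.alphaC ≤ C.betaC := by linarith
  have hXMu : (1:ℝ)/2 ≤ C.xiT * C.muOm := by nlinarith [hone]
  have h32 : (3:ℝ)/2 ≤ 2 - ν := by linarith
  have k1 : 6 * (C.betaC * (2 - ν))^2 * (C.xiT * C.muOm) ≤ (ν * C.alphaC)^2 := by
    nlinarith [hf]
  have k2 : (ν * C.alphaC)^2 ≤ C.betaC^2 := by
    nlinarith [hνB, mul_pos hν0 hA]
  have k3a : ((3:ℝ)/2 * C.betaC)^2 ≤ (C.betaC * (2 - ν))^2 := by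
    have q : (3/2:ℝ) * (3/2) ≤ (2 - ν) * (2 - ν) :=
      mul_le_mul h32 h32 (by norm_num) (by linarith)
    nlinarith [q, sq_nonneg C.betaC]
  have k3 : 6 * ((3:ℝ)/2 * C.betaC)^2 * ((1:ℝ)/2)
      ≤ 6 * (C.betaC * (2 - ν))^2 * (C.xiT * C.muOm) := by
    nlinarith [k3a, hXMu, sq_nonneg (C.betaC * (2 - ν)), sq_nonneg ((3:ℝ)/2 * C.betaC)]
  nlinarith [k1, k2, k3, mul_pos hB hB]


end IsingSL
end
end

section
/- Let E be a real normed vector space, f : E → ℝ convex and continuous, and V ⊆ E. Suppose x̂ ∈ V minimizes f over V, i.e. f(x̂) ≤ f(x) for all x ∈ V. Let γ : ℝ → E be a curve with γ(0) = x̂ that is differentiable at 0 and satisfies γ(t) ∈ V for all t ∈ (−1, 1). Then f(x̂ + γ'(0)) ≥ f(x̂). In particular, if x̂ is a smooth point of a variety V, then x̂ also minimizes f over the affine subspace x̂ + T_x̂V consisting of x̂ translated by all such curve derivatives. -/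
noncomputable section

open scoped BigOperators
open Matrix

namespace IsingSL

/-- Lemma 8, linearization lemma: if a convex continuous function `f` is
minimized over a set `V` at `x̂`, and `γ` is a curve through `x̂` staying in `V` on
`(-1,1)` that is differentiable at `0`, then `f(x̂ + γ'(0)) ≥ f(x̂)`; hence `x̂` also
minimizes `f` over `x̂` translated by all such curve derivatives (the tangent space at a
smooth point of a variety `V`). -/
theorem linearization_lemma {E : Type*} [NormedAddCommGroup E] [NormedSpace ℝ E]
    (f : E → ℝ) (hf : ConvexOn ℝ Set.univ f) (hfc : Continuous f)
    (V : Set E) (xh : E) (hxV : xh ∈ V) (hmin : ∀ x ∈ V, f xh ≤ f x)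
    (γ : ℝ → E) (v : E) (hγ0 : γ 0 = xh) (hderiv : HasDerivAt γ v 0)
    (hγV : ∀ t ∈ Set.Ioo (-1 : ℝ) 1, γ t ∈ V) :
    f xh ≤ f (xh + v) := by
  -- Step 1: f is Lipschitz on a small ball around x̂
  obtain ⟨δ, hδ, hδball⟩ : ∃ δ > 0, ∀ a, dist a xh < δ → dist (f a) (f xh) < 1 := by
    have := Metric.continuousAt_iff.mp (hfc.continuousAt (x := xh))
    exact this 1 one_pos
  have hbnd : ∀ a, dist a xh < δ → |f a| ≤ |f xh| + 1 := fun a ha => by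
    have := hδball a ha
    rw [Real.dist_eq] at this
    calc |f a| = |f xh + (f a - f xh)| := by ring_nf
      _ ≤ |f xh| + |f a - f xh| := abs_add_le _ _
      _ ≤ |f xh| + 1 := by linarith [abs_sub_comm (f a) (f xh) ▸ this.le]
  have hconvball : ConvexOn ℝ (Metric.ball xh δ) f :=
    hf.subset (Set.subset_univ _) (convex_ball _ _)
  set K := (2 * (|f xh| + 1) / (δ / 2)).toNNReal with hK
  have hlip : LipschitzOnWith K f (Metric.ball xh (δ - δ / 2)) :=
    hconvball.lipschitzOnWith_of_abs_le (by linarith) hbnd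
  rw [show δ - δ / 2 = δ / 2 by ring] at hlip
  -- Step 2: convexity slope bound
  have hslope : ∀ t ∈ Set.Ioo (0 : ℝ) 1, f (xh + t • v) - f xh ≤ t * (f (xh + v) - f xh) := by
    intro t ht
    have h := hf.2 (Set.mem_univ xh) (Set.mem_univ (xh + v))
      (show (0:ℝ) ≤ 1 - t by linarith [ht.2]) (show (0:ℝ) ≤ t from ht.1.le)
      (show (1 - t) + t = 1 by ring)
    have hpt : (1 - t) • xh + t • (xh + v) = xh + t • v := by
      rw [smul_add, sub_smul, one_smul]; abel
    rw [hpt] at h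
    have : f (xh + t • v) ≤ (1 - t) * f xh + t * f (xh + v) := by
      simpa [smul_eq_mul] using h
    nlinarith
  -- Step 3: the bound eventually holds and tends to 0
  have hne : (0 : ℝ) ≠ 0 → False := fun h => h rfl
  have htends : Filter.Tendsto (fun t => -((K : ℝ) * ‖slope γ 0 t - v‖))
      (nhdsWithin 0 (Set.Ioi 0)) (nhds 0) := by
    have h1 : Filter.Tendsto (slope γ 0) (nhdsWithin 0 {(0 : ℝ)}ᶜ) (nhds v) :=
      hasDerivAt_iff_tendsto_slope.mp hderiv
    have h2 : Filter.Tendsto (slope γ 0) (nhdsWithin 0 (Set.Ioi 0)) (nhds v) :=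
      h1.mono_left (nhdsWithin_mono 0 (fun x hx => ne_of_gt hx))
    have h3 : Filter.Tendsto (fun t => -((K : ℝ) * ‖slope γ 0 t - v‖))
        (nhdsWithin 0 (Set.Ioi 0)) (nhds (-((K : ℝ) * ‖v - v‖))) := by
      exact ((tendsto_const_nhds.mul ((h2.sub tendsto_const_nhds).norm)).neg)
    simpa using h3
  -- Eventual inequality
  have hev : ∀ᶠ t in nhdsWithin 0 (Set.Ioi 0),
      -((K : ℝ) * ‖slope γ 0 t - v‖) ≤ f (xh + v) - f xh := by
    set ε := min 1 (δ / 2 / (‖v‖ + 1)) with hε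
    have hεpos : 0 < ε := by
      apply lt_min one_pos
      positivity
    have hIoo : Set.Ioo (0 : ℝ) ε ∈ nhdsWithin 0 (Set.Ioi 0) :=
      Ioo_mem_nhdsGT_of_mem ⟨le_refl _, hεpos⟩
    have hγnear : ∀ᶠ t in nhdsWithin 0 (Set.Ioi 0), dist (γ t) xh < δ / 2 := by
      have hc : Filter.Tendsto γ (nhds 0) (nhds xh) := by
        have := hderiv.continuousAt.tendsto
        rwa [hγ0] at this
      exact (Metric.tendsto_nhds.mp hc (δ / 2) (by positivity)).filter_mono
        nhdsWithin_le_nhds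
    filter_upwards [hIoo, hγnear] with t ht hγt
    have ht0 : 0 < t := ht.1
    have ht1 : t < 1 := lt_of_lt_of_le ht.2 (min_le_left _ _)
    have htv : ‖t • v‖ < δ / 2 := by
      rw [norm_smul, Real.norm_eq_abs, abs_of_pos ht0]
      calc t * ‖v‖ ≤ t * (‖v‖ + 1) := by nlinarith
        _ < (δ / 2 / (‖v‖ + 1)) * (‖v‖ + 1) := by
            have : t < δ / 2 / (‖v‖ + 1) := lt_of_lt_of_le ht.2 (min_le_right _ _)
            have hv1 : (0 : ℝ) < ‖v‖ + 1 := by positivity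
            exact mul_lt_mul_of_pos_right this hv1
        _ = δ / 2 := div_mul_cancel₀ _ (by positivity)
    -- both points are in the ball
    have hmem1 : xh + t • v ∈ Metric.ball xh (δ / 2) := by
      rw [Metric.mem_ball, dist_eq_norm]
      simpa using htv
    have hmem2 : γ t ∈ Metric.ball xh (δ / 2) := Metric.mem_ball.mpr hγt
    -- Lipschitz estimate
    have hlipest : dist (f (γ t)) (f (xh + t • v)) ≤ (K : ℝ) * dist (γ t) (xh + t • v) :=
      hlip.dist_le_mul _ hmem2 _ hmem1
    -- distance equals t * ‖slope - v‖
    have hdist : dist (γ t) (xh + t • v) = t * ‖slope γ 0 t - v‖ := by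
      rw [dist_eq_norm]
      have hs : slope γ 0 t = t⁻¹ • (γ t - xh) := by
        simp [slope, hγ0]
      have : γ t - (xh + t • v) = t • (slope γ 0 t - v) := by
        rw [hs, smul_sub, smul_inv_smul₀ (ne_of_gt ht0)]
        abel
      rw [this, norm_smul, Real.norm_eq_abs, abs_of_pos ht0]
    -- minimality: f x̂ ≤ f (γ t)
    have hγmin : f xh ≤ f (γ t) := hmin _ (hγV t ⟨by linarith, ht1⟩)
    -- combine
    have h1 : f (γ t) - f (xh + t • v) ≤ (K : ℝ) * (t * ‖slope γ 0 t - v‖) := by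
      calc f (γ t) - f (xh + t • v) ≤ |f (γ t) - f (xh + t • v)| := le_abs_self _
        _ = dist (f (γ t)) (f (xh + t • v)) := (Real.dist_eq _ _).symm
        _ ≤ (K : ℝ) * dist (γ t) (xh + t • v) := hlipest
        _ = (K : ℝ) * (t * ‖slope γ 0 t - v‖) := by rw [hdist]
    have h2 := hslope t ⟨ht0, ht1⟩
    -- f xh ≤ f (γ t) ≤ f(xh+tv) + K t ‖·‖ ≤ f xh + t(f(xh+v)-f xh) + K t ‖·‖
    have h3 : 0 ≤ t * (f (xh + v) - f xh) + (K : ℝ) * (t * ‖slope γ 0 t - v‖) := by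
      linarith
    have hKnn : (0 : ℝ) ≤ (K : ℝ) := K.2
    nlinarith [h3]
  have := le_of_tendsto htends hev
  linarith

end IsingSL
end
end

section
/- Let E be a real normed vector space, f : E → ℝ convex and continuous, C ⊆ E convex, and V ⊆ E. Suppose x̂ ∈ C ∩ V minimizes f over C ∩ V, i.e. f(x̂) ≤ f(x) for all x ∈ C ∩ V. Let γ : ℝ → E be a curve with γ(0) = x̂ that is differentiable at 0 and satisfies γ(t) ∈ V for all t ∈ (−1, 1), and suppose the point y = x̂ + γ'(0) lies in the interior of C. Then f(y) ≥ f(x̂). Equivalently, any point of the linearized feasible set C ∩ (x̂ + T_x̂V) realized by such a curve derivative that has strictly smaller objective value than x̂ must lie outside the interior of C (i.e., on the boundary of C). -/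
noncomputable section

open scoped BigOperators
open Matrix

namespace IsingSL

/-- Lemma 9, linearization with an additional convex constraint: if a
convex continuous function `f` is minimized over `C ∩ V` at `x̂` (`C` convex), and `γ`
is a curve through `x̂` staying in `V` on `(-1,1)` that is differentiable at `0` such
that `y = x̂ + γ'(0)` lies in the interior of `C`, then `f(y) ≥ f(x̂)`; equivalently any
point of the linearized feasible set realized by such a curve derivative with strictly
smaller objective value must lie on the boundary of `C`. -/
theorem linearization_lemma_with_convex_constraint {E : Type*}
    [NormedAddCommGroup E] [NormedSpace ℝ E]
    (f : E → ℝ) (hf : ConvexOn ℝ Set.univ f) (hfc : Continuous f)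
    (Cs : Set E) (hCs : Convex ℝ Cs) (V : Set E)
    (xh : E) (hxC : xh ∈ Cs) (hxV : xh ∈ V)
    (hmin : ∀ x ∈ Cs ∩ V, f xh ≤ f x)
    (γ : ℝ → E) (v : E) (hγ0 : γ 0 = xh) (hderiv : HasDerivAt γ v 0)
    (hγV : ∀ t ∈ Set.Ioo (-1 : ℝ) 1, γ t ∈ V)
    (hy : xh + v ∈ interior Cs) :
    f xh ≤ f (xh + v) := by
  set z : ℝ → E := fun t => xh + t⁻¹ • (γ t - γ 0) with hz_def
  have hslope : Filter.Tendsto (fun t : ℝ => t⁻¹ • (γ t - γ 0)) (nhdsWithin 0 {(0:ℝ)}ᶜ)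
      (nhds v) := by
    have h := hasDerivAt_iff_tendsto_slope.mp hderiv
    have heq : slope γ 0 = fun t => t⁻¹ • (γ t - γ 0) := by
      funext t; rw [slope_def_module]; rw [sub_zero]
    rwa [heq] at h
  have hzt : Filter.Tendsto z (nhdsWithin 0 (Set.Ioi (0:ℝ))) (nhds (xh + v)) := by
    have h1 : Filter.Tendsto (fun t : ℝ => t⁻¹ • (γ t - γ 0)) (nhdsWithin 0 (Set.Ioi (0:ℝ)))
        (nhds v) :=
      hslope.mono_left (nhdsWithin_mono 0 (fun t ht => ne_of_gt ht))
    exact (tendsto_const_nhds.add h1)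
  have hev1 : ∀ᶠ t in nhdsWithin 0 (Set.Ioi (0:ℝ)), z t ∈ interior Cs :=
    hzt (isOpen_interior.mem_nhds hy)
  have hev2 : ∀ᶠ t in nhdsWithin 0 (Set.Ioi (0:ℝ)), t ∈ Set.Ioo (0:ℝ) 1 := by
    refine Filter.eventually_iff_exists_mem.mpr ⟨Set.Ioo 0 1, ?_, fun t ht => ht⟩
    exact mem_nhdsWithin.mpr ⟨Set.Iio 1, isOpen_Iio, by norm_num,
      fun t ht => ⟨ht.2, ht.1⟩⟩
  have key : ∀ᶠ t in nhdsWithin 0 (Set.Ioi (0:ℝ)), f xh ≤ f (z t) := by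
    filter_upwards [hev1, hev2] with t hzC ht
    have ht0 : (0:ℝ) < t := ht.1
    have ht1 : t < 1 := ht.2
    have hcomb : (1 - t) • xh + t • z t = γ t := by
      simp only [hz_def, hγ0, smul_add, smul_smul, mul_inv_cancel₀ (ne_of_gt ht0)]
      rw [sub_smul, one_smul, one_smul]
      abel
    have hγC : γ t ∈ Cs := by
      rw [← hcomb]
      exact hCs hxC (interior_subset hzC) (by linarith) (le_of_lt ht0) (by ring)
    have hγVt : γ t ∈ V := hγV t ⟨by linarith, ht1⟩
    have hmin' : f xh ≤ f (γ t) := hmin _ ⟨hγC, hγVt⟩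
    have hconv : f ((1 - t) • xh + t • z t) ≤ (1 - t) * f xh + t * f (z t) :=
      hf.2 (Set.mem_univ xh) (Set.mem_univ (z t)) (by linarith) (le_of_lt ht0) (by ring)
    rw [hcomb] at hconv
    nlinarith
  have hfz : Filter.Tendsto (fun t => f (z t)) (nhdsWithin 0 (Set.Ioi (0:ℝ)))
      (nhds (f (xh + v))) := (hfc.continuousAt.tendsto).comp hzt
  exact ge_of_tendsto hfz key

end IsingSL
end
end
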